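/- Let F be an infinite family of closed balls in ℝ^d, each of positive radius, such that among every countably infinite subfamily of F some two balls intersect. Then F can be pierced by finitely many points. -/

import Mathlib

open Metric Set Filter Bornology

section Aux

variable {E : Type*} [NormedAddCommGroup E] [NormedSpace ℝ E]

/-- A ball of radius `s ≥ δ` containing `p` contains a sub-ball of radius `δ`
whose center is within `δ` of `p`. -/
lemma geom_aux {p x : E} {s δ : ℝ} (hδ : 0 < δ) (hδs : δ ≤ s) (hp : dist p x ≤ s) :
    ∃ q : E, dist q p ≤ δ ∧ Metric.closedBall q δ ⊆ Metric.closedBall x s := by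
  rcases le_or_gt (dist p x) δ with h | h
  · exact ⟨x, by rwa [dist_comm], Metric.closedBall_subset_closedBall hδs⟩
  · set D := dist p x with hDdef
    have hD : 0 < D := hδ.trans h
    have hxp : ‖x - p‖ = D := by rw [← dist_eq_norm, dist_comm]
    refine ⟨p + (δ / D) • (x - p), ?_, ?_⟩
    · have : p + (δ / D) • (x - p) - p = (δ / D) • (x - p) := by abel
      rw [dist_eq_norm, this, norm_smul, Real.norm_eq_abs,
        abs_of_nonneg (le_of_lt (div_pos hδ hD)), hxp]
      rw [div_mul_cancel₀ _ (ne_of_gt hD)]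
    · have hqx : dist (p + (δ / D) • (x - p)) x = D - δ := by
        have h1 : p + (δ / D) • (x - p) - x = (δ / D - 1) • (x - p) := by
          rw [sub_smul, one_smul]; abel
        rw [dist_eq_norm, h1, norm_smul, Real.norm_eq_abs, hxp,
          abs_of_nonpos (by rw [sub_nonpos]; exact (div_le_one hD).2 h.le)]
        field_simp
        ring
      intro z hz
      rw [Metric.mem_closedBall] at hz ⊢
      calc dist z x ≤ dist z (p + (δ / D) • (x - p)) + dist (p + (δ / D) • (x - p)) x :=
            dist_triangle _ _ _
        _ ≤ δ + (D - δ) := by rw [hqx]; linarith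
        _ = D := by ring
        _ ≤ s := hp

/-- A sequence of pairs with positive second coordinates tending to zero fast has
infinite range. -/
lemma range_infinite_of_small_radii {α : Type*} {g : ℕ → α × ℝ} (h0 : ∀ n, 0 < (g n).2)
    (hs : ∀ n, (g n).2 < 1 / (n + 1)) : (Set.range g).Infinite := by
  intro hfin
  obtain ⟨b, hbmem, hbmin⟩ := Set.exists_min_image (Set.range g) Prod.snd hfin
    ⟨g 0, Set.mem_range_self 0⟩
  obtain ⟨k, hk⟩ := hbmem
  have hbpos : 0 < b.2 := by rw [← hk]; exact h0 k
  obtain ⟨n, hn⟩ := exists_nat_one_div_lt hbpos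
  have h1 : (g n).2 < 1 / (n + 1) := hs n
  have h2 : b.2 ≤ (g n).2 := hbmin (g n) (Set.mem_range_self n)
  have : (1 : ℝ) / (n + 1) < b.2 := by exact_mod_cast hn
  linarith

/-- Greedy construction of an infinite pairwise disjoint subfamily, contradiction. -/
lemma greedy_contradiction {F G : Set (E × ℝ)}
    (hr : ∀ b ∈ F, 0 < b.2)
    (hprop : ∀ S ⊆ F, S.Infinite → ∃ b ∈ S, ∃ b' ∈ S, b ≠ b' ∧
      ¬ Disjoint (Metric.closedBall b.1 b.2) (Metric.closedBall b'.1 b'.2))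
    (hG : G ⊆ F)
    (H : ∀ D : Finset (E × ℝ), (∀ b' ∈ D, b' ∈ G) → ∃ b ∈ G, ∀ b' ∈ D,
      Disjoint (Metric.closedBall b.1 b.2) (Metric.closedBall b'.1 b'.2)) : False := by
  obtain ⟨f, hfG, hfd⟩ := exists_seq_of_forall_finset_exists (· ∈ G)
    (fun b' b => Disjoint (Metric.closedBall b.1 b.2) (Metric.closedBall b'.1 b'.2))
    (fun s hs => by
      obtain ⟨b, hbG, hb⟩ := H s hs
      exact ⟨b, hbG, hb⟩)
  have hne : ∀ n, (Metric.closedBall (f n).1 (f n).2).Nonempty :=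
    fun n => ⟨(f n).1, Metric.mem_closedBall_self (le_of_lt (hr _ (hG (hfG n))))⟩
  have hdisj : ∀ m n, m ≠ n →
      Disjoint (Metric.closedBall (f m).1 (f m).2) (Metric.closedBall (f n).1 (f n).2) := by
    intro m n hmn
    rcases lt_or_gt_of_ne hmn with h | h
    · exact (hfd m n h).symm
    · exact hfd n m h
  have hinj : Function.Injective f := by
    intro m n hmn
    by_contra hne'
    have hd := hdisj m n hne'
    rw [hmn] at hd
    rw [disjoint_self] at hd
    exact absurd hd (by simpa [Set.bot_eq_empty, ← Set.not_nonempty_iff_eq_empty] using (hne n))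
  obtain ⟨b, hb, b', hb', hbb, hnd⟩ := hprop (Set.range f)
    (by rintro x ⟨n, rfl⟩; exact hG (hfG n)) (Set.infinite_range_of_injective hinj)
  obtain ⟨i, rfl⟩ := hb
  obtain ⟨j, rfl⟩ := hb'
  exact hnd (hdisj i j (fun h => hbb (by rw [h])))

/-- If a family contains arbitrarily small balls near `x` but avoiding `x`,
contradiction. -/
lemma punctured_greedy {F : Set (E × ℝ)}
    (hr : ∀ b ∈ F, 0 < b.2)
    (hprop : ∀ S ⊆ F, S.Infinite → ∃ b ∈ S, ∃ b' ∈ S, b ≠ b' ∧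
      ¬ Disjoint (Metric.closedBall b.1 b.2) (Metric.closedBall b'.1 b'.2))
    (x : E)
    (hx : ∀ δ > (0:ℝ), ∃ b ∈ F, x ∉ Metric.closedBall b.1 b.2 ∧
      Metric.closedBall b.1 b.2 ⊆ Metric.ball x δ) : False := by
  refine greedy_contradiction hr hprop
    (G := {b ∈ F | x ∉ Metric.closedBall b.1 b.2}) (Set.sep_subset _ _) ?_
  intro D hD
  set U := ⋃ b' ∈ (↑D : Set (E × ℝ)), Metric.closedBall b'.1 b'.2 with hU
  have hUδ : ∃ δ > (0:ℝ), ∀ z ∈ U, δ ≤ dist x z := by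
    rcases U.eq_empty_or_nonempty with h | h
    · exact ⟨1, one_pos, by simp [h]⟩
    · have hUc : IsClosed U :=
        Set.Finite.isClosed_biUnion D.finite_toSet (fun _ _ => Metric.isClosed_closedBall)
      have hxU : x ∉ U := by
        intro hxU
        obtain ⟨b', hb', hxb'⟩ := Set.mem_iUnion₂.1 hxU
        exact (hD b' hb').2 hxb'
      refine ⟨infDist x U, (hUc.notMem_iff_infDist_pos h).1 hxU, ?_⟩
      exact fun z hz => infDist_le_dist_of_mem hz
  obtain ⟨δ, hδpos, hδ⟩ := hUδ
  obtain ⟨b, hbF, hbx, hbsub⟩ := hx δ hδpos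
  refine ⟨b, ⟨hbF, hbx⟩, fun b' hb' => Set.disjoint_left.2 ?_⟩
  intro w hw hw'
  have hwU : w ∈ U := Set.mem_iUnion₂.2 ⟨b', hb', hw'⟩
  have h1 : δ ≤ dist x w := hδ w hwU
  have h2 : dist w x < δ := Metric.mem_ball.1 (hbsub hw)
  rw [dist_comm] at h2
  linarith

end Aux

section Main

variable {E : Type*} [NormedAddCommGroup E] [NormedSpace ℝ E] [FiniteDimensional ℝ E]

theorem main_aux (F : Set (E × ℝ))
    (hr : ∀ b ∈ F, 0 < b.2)
    (hprop : ∀ S ⊆ F, S.Infinite → ∃ b ∈ S, ∃ b' ∈ S, b ≠ b' ∧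
      ¬ Disjoint (Metric.closedBall b.1 b.2) (Metric.closedBall b'.1 b'.2)) :
    ∃ P : Set E, P.Finite ∧ ∀ b ∈ F, ∃ p ∈ P, p ∈ Metric.closedBall b.1 b.2 := by
  classical
  -- Step 1: all balls meet a fixed closed ball around the origin.
  obtain ⟨R₀, hR₀⟩ : ∃ R : ℝ, ∀ b ∈ F,
      ¬ Disjoint (Metric.closedBall b.1 b.2) (Metric.closedBall (0 : E) R) := by
    by_contra hcon
    push_neg at hcon
    refine greedy_contradiction hr hprop (Set.Subset.refl F) ?_
    intro D _
    have hbd : IsBounded (⋃ b' ∈ (↑D : Set (E × ℝ)), Metric.closedBall b'.1 b'.2) :=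
      (isBounded_biUnion D.finite_toSet).2 (fun _ _ => isBounded_closedBall)
    obtain ⟨R, hR⟩ := hbd.subset_closedBall (0 : E)
    obtain ⟨b, hbF, hb⟩ := hcon R
    refine ⟨b, hbF, fun b' hb' => hb.mono_right ?_⟩
    exact fun z hz => hR (Set.mem_iUnion₂.2 ⟨b', hb', hz⟩)
  -- The set of cluster points.
  set C : Set E := {x | ∀ ε > (0:ℝ),
    {b ∈ F | Metric.closedBall b.1 b.2 ⊆ Metric.ball x ε}.Infinite} with hCdef
  -- Step 2a: C is contained in a ball.
  have hCbdd : C ⊆ Metric.closedBall (0 : E) (R₀ + 1) := by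
    intro x hx
    obtain ⟨b, hbF, hbsub⟩ := (hx 1 one_pos).nonempty
    obtain ⟨p, hp1, hp2⟩ := Set.not_disjoint_iff.1 (hR₀ b hbF)
    have h1 : dist p x < 1 := Metric.mem_ball.1 (hbsub hp1)
    have h2 : dist p 0 ≤ R₀ := Metric.mem_closedBall.1 hp2
    rw [Metric.mem_closedBall]
    calc dist x (0:E) ≤ dist x p + dist p 0 := dist_triangle _ _ _
      _ ≤ 1 + R₀ := by rw [dist_comm x p]; linarith
      _ = R₀ + 1 := by ring
  -- Step 2b: C is finite.
  have hCfin : C.Finite := by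
    by_contra hCinf
    have hCinf' : C.Infinite := hCinf
    set e := Set.Infinite.natEmbedding C hCinf' with he
    have heC : ∀ n, (e n : E) ∈ C := fun n => (e n).2
    have hebdd : ∀ n, (e n : E) ∈ Metric.closedBall (0:E) (R₀ + 1) :=
      fun n => hCbdd (heC n)
    obtain ⟨y, -, φ, hφ, hconv⟩ := tendsto_subseq_of_bounded isBounded_closedBall hebdd
    -- accumulation: arbitrarily close distinct points of C
    have hacc : ∀ δ > (0:ℝ), ∃ z ∈ C, z ≠ y ∧ dist z y < δ := by
      intro δ hδ
      obtain ⟨N, hN⟩ := Metric.tendsto_atTop.1 hconv δ hδ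
      by_cases hy : (e (φ N) : E) = y
      · refine ⟨(e (φ (N+1)) : E), heC _, ?_, hN (N+1) (by omega)⟩
        intro h
        have : e (φ N) = e (φ (N+1)) := Subtype.ext (by rw [hy, h])
        have h2 := hφ.injective (e.injective this)
        omega
      · exact ⟨(e (φ N) : E), heC _, hy, hN N le_rfl⟩
    refine punctured_greedy hr hprop y ?_
    intro δ hδ
    obtain ⟨z, hzC, hzy, hzd⟩ := hacc (δ/4) (by positivity)
    have hdzy : 0 < dist z y := dist_pos.2 hzy
    obtain ⟨b, hbF, hbsub⟩ := (hzC (dist z y / 2) (by positivity)).nonempty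
    refine ⟨b, hbF, ?_, ?_⟩
    · intro hyb
      have : dist y z < dist z y / 2 := Metric.mem_ball.1 (hbsub hyb)
      rw [dist_comm] at this
      linarith
    · intro w hw
      have h1 : dist w z < dist z y / 2 := Metric.mem_ball.1 (hbsub hw)
      rw [Metric.mem_ball]
      calc dist w y ≤ dist w z + dist z y := dist_triangle _ _ _
        _ < δ := by linarith
  -- Step 3: balls avoiding C have radii bounded below.
  obtain ⟨ρ, hρpos, hρ⟩ : ∃ ρ > (0:ℝ), ∀ b ∈ F,
      (∀ p ∈ C, p ∉ Metric.closedBall b.1 b.2) → ρ ≤ b.2 := by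
    by_contra hcon
    push_neg at hcon
    have hseq : ∀ n : ℕ, ∃ b ∈ F,
        (∀ p ∈ C, p ∉ Metric.closedBall b.1 b.2) ∧ b.2 < 1/(n+1) := by
      intro n
      obtain ⟨b, hbF, hbC, hbr⟩ := hcon (1/(n+1)) (by positivity)
      exact ⟨b, hbF, hbC, hbr⟩
    choose g hgF hgC hgr using hseq
    have hg0 : ∀ n, 0 < (g n).2 := fun n => hr _ (hgF n)
    have hgr1 : ∀ n, (g n).2 ≤ 1 := by
      intro n
      have := hgr n
      have h2 : 1/((n:ℝ)+1) ≤ 1 := by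
        rw [div_le_one (by positivity)]
        simp
      linarith
    have hgc : ∀ n, (g n).1 ∈ Metric.closedBall (0:E) (R₀ + 1) := by
      intro n
      obtain ⟨p, hp1, hp2⟩ := Set.not_disjoint_iff.1 (hR₀ _ (hgF n))
      have h1 : dist p (g n).1 ≤ (g n).2 := Metric.mem_closedBall.1 hp1
      have h2 : dist p 0 ≤ R₀ := Metric.mem_closedBall.1 hp2
      rw [Metric.mem_closedBall]
      calc dist (g n).1 (0:E) ≤ dist (g n).1 p + dist p 0 := dist_triangle _ _ _
        _ ≤ (g n).2 + R₀ := by rw [dist_comm _ p]; linarith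
        _ ≤ R₀ + 1 := by have := hgr1 n; linarith
    obtain ⟨x, -, φ, hφ, hconv⟩ :=
      tendsto_subseq_of_bounded isBounded_closedBall hgc
    -- auxiliary: balls in the subsequence get close to x
    have hnear : ∀ ε > (0:ℝ), ∃ N : ℕ, ∀ k ≥ N,
        dist (g (φ k)).1 x < ε/2 ∧ (g (φ k)).2 < ε/2 := by
      intro ε hε
      obtain ⟨N₁, hN₁⟩ := Metric.tendsto_atTop.1 hconv (ε/2) (by positivity)
      obtain ⟨N₂, hN₂⟩ := exists_nat_one_div_lt (show (0:ℝ) < ε/2 by positivity)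
      refine ⟨max N₁ N₂, fun k hk => ⟨hN₁ k (le_trans (le_max_left _ _) hk), ?_⟩⟩
      have hk2 : N₂ ≤ φ k := le_trans (le_trans (le_max_right _ _) hk) (hφ.le_apply)
      have h1 : (g (φ k)).2 < 1/((φ k : ℝ)+1) := hgr (φ k)
      have h2 : 1/((φ k : ℝ)+1) ≤ 1/((N₂:ℝ)+1) := by
        apply one_div_le_one_div_of_le (by positivity)
        exact_mod_cast Nat.succ_le_succ hk2
      have h3 : 1/((N₂:ℝ)+1) < ε/2 := by exact_mod_cast hN₂
      linarith
    have hxC : x ∈ C := by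
      intro ε hε
      obtain ⟨N, hN⟩ := hnear ε hε
      have hsub : Set.range (fun k => g (φ (k + N))) ⊆
          {b ∈ F | Metric.closedBall b.1 b.2 ⊆ Metric.ball x ε} := by
        rintro _ ⟨k, rfl⟩
        obtain ⟨h1, h2⟩ := hN (k + N) (by omega)
        refine ⟨hgF _, fun w hw => ?_⟩
        have hw' : dist w (g (φ (k+N))).1 ≤ (g (φ (k+N))).2 := Metric.mem_closedBall.1 hw
        rw [Metric.mem_ball]
        calc dist w x ≤ dist w (g (φ (k+N))).1 + dist (g (φ (k+N))).1 x := dist_triangle _ _ _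
          _ < ε := by linarith
      refine Set.Infinite.mono hsub (range_infinite_of_small_radii
        (fun k => hg0 _) ?_)
      intro k
      have h1 : (g (φ (k+N))).2 < 1/((φ (k+N) : ℝ)+1) := hgr _
      have h2 : 1/((φ (k+N) : ℝ)+1) ≤ 1/((k:ℝ)+1) := by
        apply one_div_le_one_div_of_le (by positivity)
        have : k ≤ φ (k+N) := le_trans (by omega) (hφ.le_apply)
        exact_mod_cast Nat.succ_le_succ this
      linarith
    refine punctured_greedy hr hprop x ?_
    intro δ hδ
    obtain ⟨N, hN⟩ := hnear δ hδ
    obtain ⟨h1, h2⟩ := hN N le_rfl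
    refine ⟨g (φ N), hgF _, hgC _ x hxC, fun w hw => ?_⟩
    have hw' : dist w (g (φ N)).1 ≤ (g (φ N)).2 := Metric.mem_closedBall.1 hw
    rw [Metric.mem_ball]
    calc dist w x ≤ dist w (g (φ N)).1 + dist (g (φ N)).1 x := dist_triangle _ _ _
      _ < δ := by linarith
  -- Step 4: a net for large balls.
  set δ := min ρ 1 with hδdef
  have hδpos : 0 < δ := lt_min hρpos one_pos
  obtain ⟨N, hNfin, hNcov⟩ :=
    (Metric.totallyBounded_iff.1
      (isCompact_closedBall (0:E) (R₀+δ)).totallyBounded) δ hδpos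
  -- Step 5: conclusion.
  refine ⟨C ∪ N, hCfin.union hNfin, ?_⟩
  intro b hbF
  rcases lt_or_ge b.2 δ with hsmall | hbig
  · have hC : ¬ (∀ p ∈ C, p ∉ Metric.closedBall b.1 b.2) := by
      intro h
      have := hρ b hbF h
      have : δ ≤ b.2 := le_trans (min_le_left _ _) this
      linarith
    push_neg at hC
    obtain ⟨p, hpC, hp⟩ := hC
    exact ⟨p, Or.inl hpC, hp⟩
  · obtain ⟨p, hp1, hp2⟩ := Set.not_disjoint_iff.1 (hR₀ b hbF)
    obtain ⟨q, hq1, hq2⟩ := geom_aux hδpos hbig (Metric.mem_closedBall.1 hp1)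
    have hqK : q ∈ Metric.closedBall (0:E) (R₀+δ) := by
      rw [Metric.mem_closedBall]
      have h1 := dist_triangle q p (0:E)
      have h2 : dist p 0 ≤ R₀ := Metric.mem_closedBall.1 hp2
      linarith
    obtain ⟨y, hyN, hy⟩ := Set.mem_iUnion₂.1 (hNcov hqK)
    refine ⟨y, Or.inr hyN, hq2 ?_⟩
    rw [Metric.mem_closedBall, dist_comm]
    exact le_of_lt (Metric.mem_ball.1 hy)

end Main

/-- The `(ℵ₀, 2)`-theorem for points: if among every infinite subfamily of an infinite family of
closed balls (of positive radii) in `ℝ^d` some two balls intersect, then the family can be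
pierced by finitely many points. -/
theorem aleph0_two_theorem_points (d : ℕ)
    (F : Set (EuclideanSpace ℝ (Fin d) × ℝ)) (hinf : F.Infinite)
    (hr : ∀ b ∈ F, 0 < b.2)
    (hprop : ∀ S ⊆ F, S.Infinite → ∃ b ∈ S, ∃ b' ∈ S, b ≠ b' ∧
      ¬ Disjoint (Metric.closedBall b.1 b.2) (Metric.closedBall b'.1 b'.2)) :
    ∃ P : Set (EuclideanSpace ℝ (Fin d)), P.Finite ∧
      ∀ b ∈ F, ∃ p ∈ P, p ∈ Metric.closedBall b.1 b.2 := by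
  exact main_aux F hr hprop
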